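/- Let q be a quadratic form on a metrizable topological vector space (V, ρ). Then q admits a closed extension (a lower semicontinuous quadratic form extending q) if and only if q is lower semicontinuous on its domain, i.e., for every sequence (fₙ) in D(q) and f ∈ D(q) with fₙ → f in ρ one has q(f) ≤ liminf_{n→∞} q(fₙ). -/

import Mathlib

open Filter ENNReal

section Helpers

lemma cmul_liminf' {c : ℝ≥0∞} (hc : c ≠ ⊤) (w : ℕ → ℝ≥0∞) :
    liminf (fun n => c * w n) atTop = c * liminf w atTop := by
  rcases eq_or_ne c 0 with rfl | h0
  · simp
  apply le_antisymm
  · have h := ENNReal.liminf_mul_le (u := fun _ : ℕ => c) (v := w) (f := atTop)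
      (by left; simpa [limsup_const]) (by left; simpa [limsup_const])
    simpa [limsup_const, Pi.mul_def] using h
  · have h := ENNReal.le_liminf_mul (u := fun _ : ℕ => c) (v := w) (f := atTop)
    simpa [liminf_const, Pi.mul_def] using h

lemma add_liminf_le' {u v : ℕ → ℝ≥0∞} :
    liminf u atTop + liminf v atTop ≤ liminf (fun n => u n + v n) atTop := by
  rcases eq_or_ne (liminf u atTop) 0 with h | h
  · rw [h, zero_add]
    exact liminf_le_liminf (Eventually.of_forall fun n => le_add_self)
  rcases eq_or_ne (liminf v atTop) 0 with h' | h'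
  · rw [h', add_zero]
    exact liminf_le_liminf (Eventually.of_forall fun n => le_self_add)
  refine (le_liminf_iff (by isBoundedDefault) (by isBoundedDefault)).2 fun y hy => ?_
  obtain ⟨a, ha, b, hb, hab⟩ := ENNReal.exists_lt_add_of_lt_add hy h h'
  filter_upwards [eventually_lt_of_lt_liminf ha, eventually_lt_of_lt_liminf hb] with n h1 h2
  exact hab.trans_le (add_le_add h1.le h2.le)

lemma liminf_le_const' {u : ℕ → ℝ≥0∞} {c : ℝ≥0∞} (h : ∀ n, u n ≤ c) : liminf u atTop ≤ c :=
  (liminf_le_liminf (Eventually.of_forall h)).trans_eq (liminf_const c)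

variable {V : Type*} [AddCommGroup V] [Module ℝ V] [MetricSpace V]

lemma dist_sub' (htrans : ∀ f g h : V, dist (f + h) (g + h) = dist f g) (a b : V) :
    dist a b = dist (a - b) 0 := by
  have := htrans (a - b) 0 b
  simpa using this

lemma dist_smul_le' (htrans : ∀ f g h : V, dist (f + h) (g + h) = dist f g)
    (hbal : ∀ (l : ℝ) (f : V), |l| ≤ 1 → dist (l • f) 0 ≤ dist f 0)
    (l : ℝ) : ∃ C : ℝ, 0 ≤ C ∧ ∀ x : V, dist (l • x) 0 ≤ C * dist x 0 := by
  have h2 : ∀ x : V, dist ((2 : ℝ) • x) 0 ≤ 2 * dist x 0 := by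
    intro x
    have h1 : dist (x + x) x = dist x 0 := by
      have := htrans x 0 x; simpa using this
    calc dist ((2 : ℝ) • x) 0 = dist (x + x) 0 := by rw [two_smul]
      _ ≤ dist (x + x) x + dist x 0 := dist_triangle _ _ _
      _ = 2 * dist x 0 := by rw [h1]; ring
  have hpow : ∀ n : ℕ, ∀ x : V, dist (((2 : ℝ) ^ n) • x) 0 ≤ 2 ^ n * dist x 0 := by
    intro n
    induction n with
    | zero => intro x; simp
    | succ n ih =>
      intro x
      have : ((2 : ℝ) ^ (n + 1)) • x = (2 : ℝ) • (((2 : ℝ) ^ n) • x) := by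
        rw [← mul_smul]; ring_nf
      rw [this]
      calc dist ((2 : ℝ) • (((2 : ℝ) ^ n) • x)) 0 ≤ 2 * dist (((2 : ℝ) ^ n) • x) 0 := h2 _
        _ ≤ 2 * (2 ^ n * dist x 0) := by nlinarith [ih x]
        _ = 2 ^ (n + 1) * dist x 0 := by ring
  obtain ⟨n, hn⟩ := pow_unbounded_of_one_lt |l| (by norm_num : (1:ℝ) < 2)
  refine ⟨2 ^ n, by positivity, fun x => ?_⟩
  have hl : l = (2 : ℝ) ^ n * (l / 2 ^ n) := by field_simp
  have hsmall : |l / 2 ^ n| ≤ 1 := by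
    rw [abs_div, abs_of_pos (by positivity : (0:ℝ) < (2:ℝ) ^ n)]
    rw [div_le_one (by positivity)]
    exact hn.le
  calc dist (l • x) 0 = dist (((2 : ℝ) ^ n) • ((l / 2 ^ n) • x)) 0 := by
        rw [← mul_smul, ← hl]
    _ ≤ 2 ^ n * dist ((l / 2 ^ n) • x) 0 := hpow n _
    _ ≤ 2 ^ n * dist x 0 :=
        mul_le_mul_of_nonneg_left (hbal (l / 2 ^ n) x hsmall) (by positivity)

lemma tendsto_smul_seq' (htrans : ∀ f g h : V, dist (f + h) (g + h) = dist f g)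
    (hbal : ∀ (l : ℝ) (f : V), |l| ≤ 1 → dist (l • f) 0 ≤ dist f 0)
    (l : ℝ) {f : ℕ → V} {g : V} (hf : Tendsto f atTop (nhds g)) :
    Tendsto (fun n => l • f n) atTop (nhds (l • g)) := by
  obtain ⟨C, hC0, hC⟩ := dist_smul_le' htrans hbal l
  rw [tendsto_iff_dist_tendsto_zero] at hf ⊢
  refine squeeze_zero (fun n => dist_nonneg) (fun n => ?_) (by simpa using hf.const_mul C)
  calc dist (l • f n) (l • g) = dist (l • f n - l • g) 0 := dist_sub' htrans _ _
    _ = dist (l • (f n - g)) 0 := by rw [smul_sub]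
    _ ≤ C * dist (f n - g) 0 := hC _
    _ = C * dist (f n) g := by rw [← dist_sub' htrans]

lemma tendsto_add_seq' (htrans : ∀ f g h : V, dist (f + h) (g + h) = dist f g)
    {u v : ℕ → V} {a b : V} (hu : Tendsto u atTop (nhds a)) (hv : Tendsto v atTop (nhds b)) :
    Tendsto (fun n => u n + v n) atTop (nhds (a + b)) := by
  rw [tendsto_iff_dist_tendsto_zero] at hu hv ⊢
  refine squeeze_zero (fun n => dist_nonneg) (fun n => ?_) (by simpa using hu.add hv)
  calc dist (u n + v n) (a + b) ≤ dist (u n + v n) (a + v n) + dist (a + v n) (a + b) :=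
        dist_triangle _ _ _
    _ = dist (u n) a + dist (v n) b := by
        rw [htrans]; congr 1; rw [add_comm a (v n), add_comm a b, htrans]

end Helpers

section Relax

variable {V : Type*} [AddCommGroup V] [Module ℝ V] [MetricSpace V]

noncomputable def relax (q : V → ℝ≥0∞) (g : V) : ℝ≥0∞ :=
  ⨅ f : {f : ℕ → V // Tendsto f atTop (nhds g)}, liminf (fun n => q (f.1 n)) atTop

instance relax_nonempty (g : V) : Nonempty {f : ℕ → V // Tendsto f atTop (nhds g)} :=
  ⟨⟨fun _ => g, tendsto_const_nhds⟩⟩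

lemma relax_le {q : V → ℝ≥0∞} {f : ℕ → V} {g : V} (hf : Tendsto f atTop (nhds g)) :
    relax q g ≤ liminf (fun n => q (f n)) atTop :=
  iInf_le _ (⟨f, hf⟩ : {f : ℕ → V // Tendsto f atTop (nhds g)})

lemma relax_le_self {q : V → ℝ≥0∞} (g : V) : relax q g ≤ q g :=
  (relax_le tendsto_const_nhds).trans_eq (liminf_const _)

lemma relax_lt_iff {q : V → ℝ≥0∞} {g : V} {c : ℝ≥0∞} :
    relax q g < c ↔ ∃ f : ℕ → V, Tendsto f atTop (nhds g) ∧
      liminf (fun n => q (f n)) atTop < c := by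
  rw [relax, iInf_lt_iff]
  constructor
  · rintro ⟨⟨f, hf⟩, h⟩; exact ⟨f, hf, h⟩
  · rintro ⟨f, hf, h⟩; exact ⟨⟨f, hf⟩, h⟩

/-- From a sequence with small liminf extract a subsequence with all values small. -/
lemma exists_subseq_lt {q : V → ℝ≥0∞} {f : ℕ → V} {g : V} {c : ℝ≥0∞}
    (hf : Tendsto f atTop (nhds g)) (h : liminf (fun n => q (f n)) atTop < c) :
    ∃ h : ℕ → V, Tendsto h atTop (nhds g) ∧ ∀ n, q (h n) < c := by
  obtain ⟨φ, hφ, hlt⟩ := extraction_of_frequently_atTop (frequently_lt_of_liminf_lt (by isBoundedDefault) h)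
  exact ⟨f ∘ φ, hf.comp hφ.tendsto_atTop, hlt⟩

lemma exists_seq_lt {q : V → ℝ≥0∞} {g : V} {c : ℝ≥0∞} (h : relax q g < c) :
    ∃ h : ℕ → V, Tendsto h atTop (nhds g) ∧ ∀ n, q (h n) < c := by
  obtain ⟨f, hf, hl⟩ := relax_lt_iff.1 h
  exact exists_subseq_lt hf hl

lemma relax_lsc (q : V → ℝ≥0∞) (f : ℕ → V) (g : V) (hf : Tendsto f atTop (nhds g)) :
    relax q g ≤ liminf (fun n => relax q (f n)) atTop := by
  set L := liminf (fun n => relax q (f n)) atTop with hL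
  refine ENNReal.le_of_forall_pos_le_add fun ε hε hLtop => ?_
  have hlt : L < L + ε := by
    refine ENNReal.lt_add_right hLtop.ne ?_
    exact_mod_cast hε.ne'
  obtain ⟨φ, hφ, hlt'⟩ := extraction_of_frequently_atTop (frequently_lt_of_liminf_lt (by isBoundedDefault) hlt)
  -- for each k choose a point close to f (φ k) with q-value < L + ε
  have key : ∀ k : ℕ, ∃ v : V, dist v (f (φ k)) < 1 / (k + 1) ∧ q v < L + ε := by
    intro k
    obtain ⟨h, hh, hhlt⟩ := exists_seq_lt (hlt' k)
    obtain ⟨N, hN⟩ := Metric.tendsto_atTop.1 hh (1 / (k + 1)) (by positivity)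
    exact ⟨h N, hN N le_rfl, hhlt N⟩
  choose v hv1 hv2 using key
  have hvg : Tendsto v atTop (nhds g) := by
    rw [tendsto_iff_dist_tendsto_zero]
    have hfg : Tendsto (fun k => dist (f (φ k)) g) atTop (nhds 0) :=
      tendsto_iff_dist_tendsto_zero.1 (hf.comp hφ.tendsto_atTop)
    have h1k : Tendsto (fun k : ℕ => 1 / ((k : ℝ) + 1)) atTop (nhds 0) :=
      tendsto_one_div_add_atTop_nhds_zero_nat
    refine squeeze_zero (fun n => dist_nonneg) (fun k => ?_) (by simpa [one_div] using h1k.add hfg)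
    calc dist (v k) g ≤ dist (v k) (f (φ k)) + dist (f (φ k)) g := dist_triangle _ _ _
      _ ≤ ((k : ℝ) + 1)⁻¹ + dist (f (φ k)) g := by
          have h' := (hv1 k).le
          rw [one_div] at h'
          linarith
  exact (relax_le hvg).trans (liminf_le_const' fun n => (hv2 n).le)

end Relax

section Quad

variable {V : Type*} [AddCommGroup V] [Module ℝ V] [MetricSpace V]
variable {q : V → ℝ≥0∞}

lemma q_zero' (hhom : ∀ (l : ℝ) (f : V), q (l • f) = ENNReal.ofReal (l ^ 2) * q f) :
    q 0 = 0 := by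
  have := hhom 0 0
  simpa using this

lemma relax_zero' (hhom : ∀ (l : ℝ) (f : V), q (l • f) = ENNReal.ofReal (l ^ 2) * q f) :
    relax q 0 = 0 :=
  le_antisymm ((relax_le_self 0).trans_eq (q_zero' hhom)) zero_le

lemma relax_smul_le (htrans : ∀ f g h : V, dist (f + h) (g + h) = dist f g)
    (hbal : ∀ (l : ℝ) (f : V), |l| ≤ 1 → dist (l • f) 0 ≤ dist f 0)
    (hhom : ∀ (l : ℝ) (f : V), q (l • f) = ENNReal.ofReal (l ^ 2) * q f)
    (l : ℝ) (hl : l ≠ 0) (g : V) :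
    relax q (l • g) ≤ ENNReal.ofReal (l ^ 2) * relax q g := by
  have ha0 : ENNReal.ofReal (l ^ 2) ≠ 0 := by
    rw [Ne, ENNReal.ofReal_eq_zero, not_le]
    positivity
  have hdist : ENNReal.ofReal (l ^ 2) * relax q g =
      ⨅ f : {f : ℕ → V // Tendsto f atTop (nhds g)},
        ENNReal.ofReal (l ^ 2) * liminf (fun n => q (f.1 n)) atTop :=
    ENNReal.mul_iInf_of_ne ha0 ENNReal.ofReal_ne_top
  rw [hdist]
  refine le_iInf fun f => ?_
  calc relax q (l • g) ≤ liminf (fun n => q (l • f.1 n)) atTop :=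
        relax_le (tendsto_smul_seq' htrans hbal l f.2)
    _ = liminf (fun n => ENNReal.ofReal (l ^ 2) * q (f.1 n)) atTop := by simp only [hhom]
    _ = ENNReal.ofReal (l ^ 2) * liminf (fun n => q (f.1 n)) atTop :=
        cmul_liminf' ENNReal.ofReal_ne_top _

lemma relax_hom (htrans : ∀ f g h : V, dist (f + h) (g + h) = dist f g)
    (hbal : ∀ (l : ℝ) (f : V), |l| ≤ 1 → dist (l • f) 0 ≤ dist f 0)
    (hhom : ∀ (l : ℝ) (f : V), q (l • f) = ENNReal.ofReal (l ^ 2) * q f)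
    (l : ℝ) (g : V) :
    relax q (l • g) = ENNReal.ofReal (l ^ 2) * relax q g := by
  rcases eq_or_ne l 0 with rfl | hl
  · simp [zero_smul, relax_zero' hhom]
  refine le_antisymm (relax_smul_le htrans hbal hhom l hl g) ?_
  have h2 := relax_smul_le htrans hbal hhom l⁻¹ (inv_ne_zero hl) (l • g)
  rw [inv_smul_smul₀ hl] at h2
  calc ENNReal.ofReal (l ^ 2) * relax q g
      ≤ ENNReal.ofReal (l ^ 2) * (ENNReal.ofReal (l⁻¹ ^ 2) * relax q (l • g)) :=
        mul_le_mul_right h2 _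
    _ = relax q (l • g) := by
        rw [← mul_assoc, ← ENNReal.ofReal_mul (by positivity)]
        have : l ^ 2 * l⁻¹ ^ 2 = 1 := by field_simp
        rw [this]
        simp

lemma relax_par_le (htrans : ∀ f g h : V, dist (f + h) (g + h) = dist f g)
    (hbal : ∀ (l : ℝ) (f : V), |l| ≤ 1 → dist (l • f) 0 ≤ dist f 0)
    (hpar : ∀ f g : V, q (f + g) + q (f - g) = 2 * q f + 2 * q g)
    (a b : V) :
    relax q (a + b) + relax q (a - b) ≤ 2 * relax q a + 2 * relax q b := by
  refine ENNReal.le_of_forall_pos_le_add fun ε hε htop => ?_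
  have hA : relax q a < ⊤ := by
    refine lt_of_le_of_lt ?_ htop
    calc relax q a = 1 * relax q a := (one_mul _).symm
      _ ≤ 2 * relax q a := mul_le_mul_left (by norm_num) _
      _ ≤ 2 * relax q a + 2 * relax q b := le_self_add
  have hB : relax q b < ⊤ := by
    refine lt_of_le_of_lt ?_ htop
    calc relax q b = 1 * relax q b := (one_mul _).symm
      _ ≤ 2 * relax q b := mul_le_mul_left (by norm_num) _
      _ ≤ 2 * relax q a + 2 * relax q b := le_add_self
  set δ : ℝ≥0∞ := (ε : ℝ≥0∞) / 4 with hδ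
  have hδ0 : δ ≠ 0 := by
    rw [hδ, Ne, ENNReal.div_eq_zero_iff]
    push_neg
    exact ⟨by exact_mod_cast hε.ne', by norm_num⟩
  obtain ⟨u, hu, hu2⟩ := exists_seq_lt (ENNReal.lt_add_right hA.ne hδ0)
  obtain ⟨v, hv, hv2⟩ := exists_seq_lt (ENNReal.lt_add_right hB.ne hδ0)
  have hsum : Tendsto (fun n => u n + v n) atTop (nhds (a + b)) := tendsto_add_seq' htrans hu hv
  have hdiff : Tendsto (fun n => u n - v n) atTop (nhds (a - b)) := by
    have hneg : Tendsto (fun n => (-1 : ℝ) • v n) atTop (nhds ((-1 : ℝ) • b)) :=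
      tendsto_smul_seq' htrans hbal _ hv
    simp only [neg_one_smul] at hneg
    simp only [sub_eq_add_neg]
    exact tendsto_add_seq' htrans hu hneg
  have h4δ : 4 * δ = (ε : ℝ≥0∞) := by
    rw [hδ]
    exact ENNReal.mul_div_cancel' (by norm_num) (by norm_num)
  calc relax q (a + b) + relax q (a - b)
      ≤ liminf (fun n => q (u n + v n)) atTop + liminf (fun n => q (u n - v n)) atTop :=
        add_le_add (relax_le hsum) (relax_le hdiff)
    _ ≤ liminf (fun n => q (u n + v n) + q (u n - v n)) atTop := add_liminf_le'
    _ ≤ 2 * (relax q a + δ) + 2 * (relax q b + δ) := by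
        refine liminf_le_const' fun n => ?_
        rw [hpar]
        exact add_le_add (mul_le_mul_right (hu2 n).le 2) (mul_le_mul_right (hv2 n).le 2)
    _ = 2 * relax q a + 2 * relax q b + 4 * δ := by ring
    _ = 2 * relax q a + 2 * relax q b + ε := by rw [h4δ]

lemma relax_par (htrans : ∀ f g h : V, dist (f + h) (g + h) = dist f g)
    (hbal : ∀ (l : ℝ) (f : V), |l| ≤ 1 → dist (l • f) 0 ≤ dist f 0)
    (hhom : ∀ (l : ℝ) (f : V), q (l • f) = ENNReal.ofReal (l ^ 2) * q f)
    (hpar : ∀ f g : V, q (f + g) + q (f - g) = 2 * q f + 2 * q g)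
    (a b : V) :
    relax q (a + b) + relax q (a - b) = 2 * relax q a + 2 * relax q b := by
  refine le_antisymm (relax_par_le htrans hbal hpar a b) ?_
  have h1 := relax_par_le htrans hbal hpar (a + b) (a - b)
  have e1 : (a + b) + (a - b) = (2 : ℝ) • a := by rw [two_smul]; abel
  have e2 : (a + b) - (a - b) = (2 : ℝ) • b := by rw [two_smul]; abel
  rw [e1, e2, relax_hom htrans hbal hhom, relax_hom htrans hbal hhom] at h1
  have h4 : ENNReal.ofReal ((2 : ℝ) ^ 2) = 4 := by
    rw [show ((2 : ℝ) ^ 2) = (4 : ℝ) by norm_num]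
    exact ENNReal.ofReal_ofNat 4
  rw [h4] at h1
  have h2 : 2 * (2 * relax q a + 2 * relax q b) ≤ 2 * (relax q (a + b) + relax q (a - b)) := by
    calc 2 * (2 * relax q a + 2 * relax q b) = 4 * relax q a + 4 * relax q b := by ring
      _ ≤ 2 * relax q (a + b) + 2 * relax q (a - b) := h1
      _ = 2 * (relax q (a + b) + relax q (a - b)) := by ring
  exact (ENNReal.mul_le_mul_iff_right (by norm_num) (by norm_num)).1 h2

lemma relax_eq
    (H : ∀ (f : ℕ → V) (g : V), (∀ n, q (f n) < ⊤) → q g < ⊤ →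
      Tendsto f atTop (nhds g) → q g ≤ liminf (fun n => q (f n)) atTop)
    {g : V} (hg : q g < ⊤) : relax q g = q g := by
  refine le_antisymm (relax_le_self g) (le_iInf fun f => ?_)
  refine ENNReal.le_of_forall_pos_le_add fun ε hε hLtop => ?_
  have hlt : liminf (fun n => q (f.1 n)) atTop < liminf (fun n => q (f.1 n)) atTop + ε :=
    ENNReal.lt_add_right hLtop.ne (by exact_mod_cast hε.ne')
  obtain ⟨φ, hφ, hltφ⟩ :=
    extraction_of_frequently_atTop (frequently_lt_of_liminf_lt (by isBoundedDefault) hlt)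
  have hfin : ∀ n, q (f.1 (φ n)) < ⊤ := fun n => (hltφ n).trans_le le_top
  have hq := H (f.1 ∘ φ) g hfin hg (f.2.comp hφ.tendsto_atTop)
  exact hq.trans (liminf_le_const' fun n => (hltφ n).le)

end Quad

theorem stmt3 {V : Type*} [AddCommGroup V] [Module ℝ V] [MetricSpace V]
    (htrans : ∀ f g h : V, dist (f + h) (g + h) = dist f g)
    (hbal : ∀ (l : ℝ) (f : V), |l| ≤ 1 → dist (l • f) 0 ≤ dist f 0)
    (hsmul : ∀ f : V, Tendsto (fun c : ℝ => c • f) (nhds 0) (nhds (0 : V)))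
    (q : V → ℝ≥0∞)
    (hhom : ∀ (l : ℝ) (f : V), q (l • f) = ENNReal.ofReal (l ^ 2) * q f)
    (hpar : ∀ f g : V, q (f + g) + q (f - g) = 2 * q f + 2 * q g) :
    -- `q` has a closed (lower semicontinuous) quadratic extension iff
    -- `q` is lower semicontinuous on its domain
    (∃ Q : V → ℝ≥0∞,
        (∀ (l : ℝ) (f : V), Q (l • f) = ENNReal.ofReal (l ^ 2) * Q f) ∧
        (∀ f g : V, Q (f + g) + Q (f - g) = 2 * Q f + 2 * Q g) ∧
        (∀ (f : ℕ → V) (g : V), Tendsto f atTop (nhds g) →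
          Q g ≤ liminf (fun n => Q (f n)) atTop) ∧
        (∀ f : V, q f < ⊤ → Q f = q f)) ↔
      (∀ (f : ℕ → V) (g : V), (∀ n, q (f n) < ⊤) → q g < ⊤ →
        Tendsto f atTop (nhds g) →
        q g ≤ liminf (fun n => q (f n)) atTop) := by
  constructor
  · rintro ⟨Q, hQh, hQp, hQl, hQe⟩ f g hfin hg hf
    have h1 : Q g ≤ liminf (fun n => Q (f n)) atTop := hQl f g hf
    rw [hQe g hg] at h1
    have h2 : (fun n => Q (f n)) = fun n => q (f n) := funext fun n => hQe _ (hfin n)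
    rwa [h2] at h1
  · intro H
    exact ⟨relax q, relax_hom htrans hbal hhom, relax_par htrans hbal hhom hpar,
      relax_lsc q, fun f hf => relax_eq H hf⟩
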